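/- Let S be an inverse semigroup and ρ a left congruence on S. If the ρ-class of the idempotent a⁻¹a is the singleton {a⁻¹a}, then the ρ-class of a is the singleton {a}. -/
import Mathlib


class InverseSemigroup (S : Type*) extends Semigroup S where
  inv : S → S
  mul_inv_mul : ∀ a : S, a * inv a * a = a
  inv_mul_inv : ∀ a : S, inv a * a * inv a = inv a
  inv_unique : ∀ a b : S, a * b * a = a → b * a * b = b → b = inv a

open InverseSemigroup

/-- `e` is an idempotent. -/
def IsIdem {S : Type*} [Mul S] (e : S) : Prop := e * e = e

/-- `r` is a left congruence: an equivalence relation compatible with left multiplication. -/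
def IsLeftCongruence {S : Type*} [Semigroup S] (r : S → S → Prop) : Prop :=
  Equivalence r ∧ ∀ a b c : S, r a b → r (c * a) (c * b)

/-- The inverse kernel of a relation: elements related to `a * a⁻¹`. -/
def InK {S : Type*} [InverseSemigroup S] (r : S → S → Prop) : Set S :=
  {a | r a (a * inv a)}

/-- The kernel: elements related to some idempotent. -/
def lker {S : Type*} [InverseSemigroup S] (r : S → S → Prop) : Set S :=
  {a | ∃ e, IsIdem e ∧ r a e}

/-- `τ` is a congruence on the semilattice of idempotents `E(S)`. -/
def IsECong {S : Type*} [InverseSemigroup S] (τ : S → S → Prop) : Prop :=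
  (∀ e f, τ e f → IsIdem e ∧ IsIdem f) ∧
  (∀ e, IsIdem e → τ e e) ∧
  (∀ e f, τ e f → τ f e) ∧
  (∀ e f g, τ e f → τ f g → τ e g) ∧
  (∀ e f g, IsIdem g → τ e f → τ (g * e) (g * f))

/-- The normaliser of a congruence on the idempotents. -/
def normaliser {S : Type*} [InverseSemigroup S] (τ : S → S → Prop) : Set S :=
  {a | ∀ e f, τ e f → τ (a * e * inv a) (a * f * inv a) ∧ τ (inv a * e * a) (inv a * f * a)}

/-- `T` is a full inverse subsemigroup of `S`. -/
def IsFullInverseSub {S : Type*} [InverseSemigroup S] (T : Set S) : Prop :=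
  (∀ e : S, IsIdem e → e ∈ T) ∧ (∀ a b, a ∈ T → b ∈ T → a * b ∈ T) ∧
  (∀ a, a ∈ T → inv a ∈ T)

section Aux
variable {S : Type*} [InverseSemigroup S]

lemma my_inv_inv (a : S) : inv (inv a) = a :=
  (inv_unique (inv a) a (inv_mul_inv a) (mul_inv_mul a)).symm

lemma idem_inv {e : S} (he : IsIdem e) : inv e = e := by
  have h : e * e * e = e := by rw [he, he]
  exact (inv_unique e e h h).symm

lemma idem_mul_inv (a : S) : IsIdem (a * inv a) := by
  show a * inv a * (a * inv a) = a * inv a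
  rw [← mul_assoc, mul_inv_mul]

lemma idem_inv_mul (a : S) : IsIdem (inv a * a) := by
  show inv a * a * (inv a * a) = inv a * a
  rw [← mul_assoc, inv_mul_inv]

lemma idem_mul_idem {e f : S} (he : IsIdem e) (hf : IsIdem f) : IsIdem (e * f) := by
  have he' : ∀ y : S, e * (e * y) = e * y := fun y => by rw [← mul_assoc, he]
  have hf' : ∀ y : S, f * (f * y) = f * y := fun y => by rw [← mul_assoc, hf]
  set x := inv (e * f) with hx
  have h1 : (e * f) * x * (e * f) = e * f := mul_inv_mul (e * f)
  have h2 : x * (e * f) * x = x := inv_mul_inv (e * f)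
  simp only [mul_assoc] at h1 h2
  have h2e : x * (e * (f * (x * e))) = x * e := by
    have := congrArg (· * e) h2
    simp only [mul_assoc] at this
    exact this
  have hfxe : f * (x * e) = x := by
    apply inv_unique (e * f) (f * (x * e))
    · simp only [mul_assoc, he', hf']; exact h1
    · simp only [mul_assoc, he', hf']; rw [h2e]
  have hxidem : IsIdem x := by
    show x * x = x
    calc x * x = (f * (x * e)) * (f * (x * e)) := by rw [hfxe]
    _ = f * (x * (e * (f * (x * e)))) := by simp only [mul_assoc]
    _ = f * (x * e) := by rw [h2e]
    _ = x := hfxe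
  have hef : e * f = x := by
    have h := inv_unique x (e * f) (by simp only [mul_assoc]; exact h2)
      (by simp only [mul_assoc]; exact h1)
    rwa [idem_inv hxidem] at h
  rw [hef] at *
  exact hxidem

lemma idem_comm {e f : S} (he : IsIdem e) (hf : IsIdem f) : e * f = f * e := by
  have he' : ∀ y : S, e * (e * y) = e * y := fun y => by rw [← mul_assoc, he]
  have hf' : ∀ y : S, f * (f * y) = f * y := fun y => by rw [← mul_assoc, hf]
  have hef : e * (f * (e * f)) = e * f := by
    have := idem_mul_idem he hf
    simp only [IsIdem, mul_assoc] at this ⊢; exact this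
  have hfe : f * (e * (f * e)) = f * e := by
    have := idem_mul_idem hf he
    simp only [IsIdem, mul_assoc] at this ⊢; exact this
  have : f * e = inv (e * f) := by
    apply inv_unique (e * f) (f * e)
    · simp only [mul_assoc, he', hf']; exact hef
    · simp only [mul_assoc, he', hf']; exact hfe
  rw [this, idem_inv (idem_mul_idem he hf)]

end Aux

theorem stmt18 {S : Type*} [InverseSemigroup S] (r : S → S → Prop)
    (hr : IsLeftCongruence r) (a : S)
    (ha : ∀ b : S, r (inv a * a) b → b = inv a * a) :
    ∀ b : S, r a b → b = a := by
  intro b hab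
  obtain ⟨heq, hcong⟩ := hr
  have e1 : inv a * b = inv a * a := ha _ (hcong a b (inv a) hab)
  -- commuting idempotents a a⁻¹ and b b⁻¹, with a trailing factor
  have comm' : ∀ z : S, a * (inv a * (b * (inv b * z))) = b * (inv b * (a * (inv a * z))) := by
    intro z
    have := congrArg (· * z) (idem_comm (idem_mul_inv a) (idem_mul_inv b))
    simp only [mul_assoc] at this
    exact this
  have haa : ∀ z : S, a * (inv a * (a * z)) = a * z := fun z => by
    rw [← mul_assoc, ← mul_assoc, mul_inv_mul]
  have haa' : ∀ z : S, inv a * (a * (inv a * z)) = inv a * z := fun z => by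
    rw [← mul_assoc, ← mul_assoc, inv_mul_inv]
  have hbb : b * (inv b * b) = b := by rw [← mul_assoc, mul_inv_mul]
  have hbb' : ∀ z : S, inv b * (b * (inv b * z)) = inv b * z := fun z => by
    rw [← mul_assoc, ← mul_assoc, inv_mul_inv]
  have hba : inv b * a = inv a * a := by
    have key : inv b * a = inv (inv a * b) := by
      apply inv_unique (inv a * b) (inv b * a)
      · show inv a * b * (inv b * a) * (inv a * b) = inv a * b
        simp only [mul_assoc]
        rw [← comm' b, haa', hbb]
      · show inv b * a * (inv a * b) * (inv b * a) = inv b * a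
        simp only [mul_assoc]
        rw [comm' a, hbb']
        rw [show a * (inv a * a) = a from by rw [← mul_assoc, mul_inv_mul]]
    rw [key, e1, idem_inv (idem_inv_mul a)]
  have e2 : inv b * b = inv a * a := by
    have h2 := hcong a b (inv b) hab
    rw [hba] at h2
    exact ha _ h2
  have ea : a * (inv a * b) = a := by rw [e1, ← mul_assoc, mul_inv_mul]
  have eb : b * (inv b * a) = b := by rw [hba, ← e2, ← mul_assoc, mul_inv_mul]
  calc b = b * (inv b * a) := eb.symm
    _ = b * (inv b * (a * (inv a * b))) := by rw [ea]
    _ = a * (inv a * (b * (inv b * b))) := (comm' b).symm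
    _ = a * (inv a * b) := by rw [hbb]
    _ = a := ea
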